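/- Let E be a real inner product space, Z ⊆ E a nonempty convex set, H : Z → E monotone on Z and satisfying the (M, δ)-condition on Z (M > 0, δ ≥ 0), and V a Bregman-type distance on Z. Let g ∈ E, let T ≥ 1 be an integer, let β > 0 and η¹, …, η^T > 0 satisfy M ≤ η^t for all t and M ≤ β + η^t for all t and η^t ≤ β + η^{t−1} for 2 ≤ t ≤ T. Let a ∈ Z, z⁰ = a, and let z¹, …, z^T, z̃¹, …, z̃^T ∈ Z be points such that for every t = 1, …, T and every z ∈ Z the prox inequality holds: ⟨g, z̃^t − z⟩ + ⟨H(z̃^t), z^t − z⟩ + ⟨H(z^{t−1}), z̃^t − z^t⟩ ≤ β·(V(a, z) − V(z^t, z) − V(a, z̃^t) − V(z̃^t, z^t)) + η^t·(V(z^{t−1}, z) − V(z^t, z) − V(z^{t−1}, z̃^t) − V(z̃^t, z^t)). Set z̃ = (1/T)·Σ_{t=1}^T z̃^t. Then for every z ∈ Z: ⟨g + H(z), z̃ − z⟩ ≤ −β·V(a, z̃) + (β + η¹/T)·V(a, z) − ((β + η^T)/T)·V(z^T, z) + δ. -/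
import Mathlib


open RealInnerProductSpace Finset

theorem mps_inner_loop_deterministic
    {E : Type*} [NormedAddCommGroup E] [InnerProductSpace ℝ E]
    (Z : Set E) (hZne : Z.Nonempty) (hZconv : Convex ℝ Z)
    (H : E → E) (M δ : ℝ) (hM : 0 < M) (hδ : 0 ≤ δ)
    (hmono : ∀ u ∈ Z, ∀ v ∈ Z, 0 ≤ ⟪H u - H v, u - v⟫)
    (hMδ : ∀ z₁ ∈ Z, ∀ z₂ ∈ Z, ∀ z₃ ∈ Z,
      ⟪H z₁ - H z₂, z₁ - z₃⟫ ≤ M / 2 * ‖z₁ - z₂‖ ^ 2 + M / 2 * ‖z₁ - z₃‖ ^ 2 + δ)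
    (V : E → E → ℝ)
    (hVlb : ∀ u ∈ Z, ∀ w ∈ Z, 1 / 2 * ‖u - w‖ ^ 2 ≤ V u w)
    (hVzero : ∀ u ∈ Z, V u u = 0)
    (hVconv : ∀ u ∈ Z, ConvexOn ℝ Z (V u))
    (g : E) (T : ℕ) (hT : 1 ≤ T)
    (β : ℝ) (hβ : 0 < β)
    (η : ℕ → ℝ) (hηpos : ∀ t ∈ Icc 1 T, 0 < η t)
    (hMη : ∀ t ∈ Icc 1 T, M ≤ η t)
    (hMβη : ∀ t ∈ Icc 1 T, M ≤ β + η t)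
    (hηchain : ∀ t ∈ Icc 2 T, η t ≤ β + η (t - 1))
    (a : E) (ha : a ∈ Z)
    (zs zts : ℕ → E) (hz0 : zs 0 = a)
    (hzsZ : ∀ t ∈ Icc 1 T, zs t ∈ Z) (hztsZ : ∀ t ∈ Icc 1 T, zts t ∈ Z)
    (hprox : ∀ t ∈ Icc 1 T, ∀ z ∈ Z,
      ⟪g, zts t - z⟫ + ⟪H (zts t), zs t - z⟫ + ⟪H (zs (t - 1)), zts t - zs t⟫
        ≤ β * (V a z - V (zs t) z - V a (zts t) - V (zts t) (zs t))
          + η t * (V (zs (t - 1)) z - V (zs t) z - V (zs (t - 1)) (zts t)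
              - V (zts t) (zs t)))
    (ztavg : E) (havg : ztavg = (T : ℝ)⁻¹ • ∑ t ∈ Icc 1 T, zts t) :
    ∀ z ∈ Z,
      ⟪g + H z, ztavg - z⟫
        ≤ -β * V a ztavg + (β + η 1 / T) * V a z
            - (β + η T) / T * V (zs T) z + δ := by
  intro z hz
  have hT0 : (0:ℝ) < T := by exact_mod_cast hT
  have hVnn : ∀ u ∈ Z, ∀ w ∈ Z, 0 ≤ V u w := fun u hu w hw =>
    le_trans (by positivity) (hVlb u hu w hw)
  have hzsZ' : ∀ t, t ≤ T → zs t ∈ Z := by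
    intro t ht
    rcases Nat.eq_zero_or_pos t with h0 | h1
    · rw [h0, hz0]; exact ha
    · exact hzsZ t (mem_Icc.mpr ⟨h1, ht⟩)
  have hcard : (Icc 1 T).card = T := by simp
  -- per-step bound
  have key : ∀ t ∈ Icc 1 T,
      ⟪g + H z, zts t - z⟫ ≤ β * (V a z - V (zs t) z - V a (zts t))
        + η t * (V (zs (t-1)) z - V (zs t) z) + δ := by
    intro t ht
    obtain ⟨ht1, htT⟩ := mem_Icc.mp ht
    have hp : zs (t-1) ∈ Z := hzsZ' _ (le_trans (Nat.sub_le _ _) htT)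
    have hq : zs t ∈ Z := hzsZ t ht
    have hr : zts t ∈ Z := hztsZ t ht
    have h1 := hprox t ht z hz
    have h2 := hMδ (zts t) hr (zs (t-1)) hp (zs t) hq
    have h3 : ‖zts t - zs (t-1)‖^2 ≤ 2 * V (zs (t-1)) (zts t) := by
      have := hVlb _ hp _ hr
      rw [norm_sub_rev]; linarith
    have h4 : ‖zts t - zs t‖^2 ≤ 2 * V (zts t) (zs t) := by
      have := hVlb _ hr _ hq; linarith
    have h5 : 0 ≤ ⟪H (zts t) - H z, zts t - z⟫ := hmono _ hr _ hz
    have hMt := hMη t ht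
    have hMbt := hMβη t ht
    have hVpr := hVnn _ hp _ hr
    have hVrq := hVnn _ hr _ hq
    have hid : ⟪g + H z, zts t - z⟫ =
        (⟪g, zts t - z⟫ + ⟪H (zts t), zs t - z⟫ + ⟪H (zs (t-1)), zts t - zs t⟫)
        + ⟪H (zts t) - H (zs (t-1)), zts t - zs t⟫
        - ⟪H (zts t) - H z, zts t - z⟫ := by
      simp only [inner_add_left, inner_sub_left, inner_sub_right]; ring
    rw [hid]
    nlinarith [mul_le_mul_of_nonneg_left h3 (by positivity : (0:ℝ) ≤ M/2),
      mul_le_mul_of_nonneg_left h4 (by positivity : (0:ℝ) ≤ M/2),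
      mul_nonneg (sub_nonneg.mpr hMt) hVpr,
      mul_nonneg (sub_nonneg.mpr hMbt) hVrq]
  -- telescoping
  have tele : ∀ n, 1 ≤ n → n ≤ T →
      ∑ t ∈ Icc 1 n, (η t * V (zs (t-1)) z - (β + η t) * V (zs t) z)
        ≤ η 1 * V a z - (β + η n) * V (zs n) z := by
    intro n hn
    induction n, hn using Nat.le_induction with
    | base => intro _; rw [Icc_self, sum_singleton]; simp [hz0]
    | succ n hn ih =>
      intro hnT
      rw [Finset.sum_Icc_succ_top (by omega : 1 ≤ n+1)]
      have hchain := hηchain (n+1) (mem_Icc.mpr ⟨by omega, hnT⟩)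
      have hVn : 0 ≤ V (zs n) z := hVnn _ (hzsZ' n (by omega)) _ hz
      have hih := ih (by omega)
      simp only [Nat.add_sub_cancel] at hchain ⊢
      nlinarith [mul_nonneg (sub_nonneg.mpr hchain) hVn]
  -- sum of per-step bounds
  have sum_le : ∑ t ∈ Icc 1 T, ⟪g + H z, zts t - z⟫
      ≤ (T:ℝ) * (β * V a z + δ) - β * ∑ t ∈ Icc 1 T, V a (zts t)
        + (η 1 * V a z - (β + η T) * V (zs T) z) := by
    calc ∑ t ∈ Icc 1 T, ⟪g + H z, zts t - z⟫
        ≤ ∑ t ∈ Icc 1 T, (β * (V a z - V (zs t) z - V a (zts t))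
            + η t * (V (zs (t-1)) z - V (zs t) z) + δ) := sum_le_sum key
      _ = (T:ℝ) * (β * V a z + δ) - β * ∑ t ∈ Icc 1 T, V a (zts t)
          + ∑ t ∈ Icc 1 T, (η t * V (zs (t-1)) z - (β + η t) * V (zs t) z) := by
          have hsplit : ∀ t ∈ Icc 1 T, β * (V a z - V (zs t) z - V a (zts t))
                + η t * (V (zs (t-1)) z - V (zs t) z) + δ
              = ((β * V a z + δ) + (-β) * V a (zts t))
                + (η t * V (zs (t-1)) z - (β + η t) * V (zs t) z) := fun t _ => by ring
          rw [Finset.sum_congr rfl hsplit, Finset.sum_add_distrib, Finset.sum_add_distrib, Finset.sum_const,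
            ← Finset.mul_sum, hcard, nsmul_eq_mul]
          ring
      _ ≤ _ := by linarith [tele T hT le_rfl]
  -- convexity / Jensen
  have hconv : V a ztavg ≤ (T:ℝ)⁻¹ * ∑ t ∈ Icc 1 T, V a (zts t) := by
    have hjen := (hVconv a ha).map_sum_le (t := Icc 1 T)
      (w := fun _ => (T:ℝ)⁻¹) (p := zts)
      (fun i _ => by positivity)
      (by rw [Finset.sum_const, hcard, nsmul_eq_mul]; field_simp)
      (fun i hi => hztsZ i hi)
    rw [havg, Finset.smul_sum]
    calc V a (∑ t ∈ Icc 1 T, (T:ℝ)⁻¹ • zts t)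
        ≤ ∑ t ∈ Icc 1 T, (T:ℝ)⁻¹ • V a (zts t) := hjen
      _ = (T:ℝ)⁻¹ * ∑ t ∈ Icc 1 T, V a (zts t) := by
          simp only [smul_eq_mul]; rw [← Finset.mul_sum]
  -- express the averaged inner product
  have hS : ⟪g + H z, ztavg - z⟫
      = (T:ℝ)⁻¹ * ∑ t ∈ Icc 1 T, ⟪g + H z, zts t - z⟫ := by
    simp only [inner_sub_right, havg, inner_smul_right, inner_sum,
      Finset.sum_sub_distrib, Finset.sum_const, hcard, nsmul_eq_mul]
    field_simp
  -- combine
  have hcT : (T:ℝ) * (β * V a ztavg) ≤ β * ∑ t ∈ Icc 1 T, V a (zts t) := by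
    have := mul_le_mul_of_nonneg_left hconv hβ.le
    calc (T:ℝ) * (β * V a ztavg) = (T:ℝ) * (β * V a ztavg) := rfl
      _ ≤ (T:ℝ) * (β * ((T:ℝ)⁻¹ * ∑ t ∈ Icc 1 T, V a (zts t))) :=
          mul_le_mul_of_nonneg_left this hT0.le
      _ = β * ∑ t ∈ Icc 1 T, V a (zts t) := by field_simp
  have hY : ∑ t ∈ Icc 1 T, ⟪g + H z, zts t - z⟫
      ≤ (T:ℝ) * (-β * V a ztavg + (β + η 1 / T) * V a z
          - (β + η T) / T * V (zs T) z + δ) := by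
    have hexp : (T:ℝ) * (-β * V a ztavg + (β + η 1 / T) * V a z
          - (β + η T) / T * V (zs T) z + δ)
        = (T:ℝ) * (β * V a z + δ) - (T:ℝ) * (β * V a ztavg)
          + (η 1 * V a z - (β + η T) * V (zs T) z) := by
      field_simp
      ring
    rw [hexp]
    linarith [sum_le, hcT]
  rw [hS]
  calc (T:ℝ)⁻¹ * ∑ t ∈ Icc 1 T, ⟪g + H z, zts t - z⟫
      ≤ (T:ℝ)⁻¹ * ((T:ℝ) * (-β * V a ztavg + (β + η 1 / T) * V a z
          - (β + η T) / T * V (zs T) z + δ)) :=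
        mul_le_mul_of_nonneg_left hY (by positivity)
    _ = _ := by field_simp
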